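/- Let T be a finite set of k ≥ 1 collinear points in ℝ^d and r : T → (0,∞). Then the number of ordered pairs (x,y) with x,y ∈ T, x ≠ y, and dist(x,y) = r(x) is at most 2k − 2. -/

import Mathlib

open scoped Classical in
/-- For a nonempty finite set `T` of `k` collinear points in `ℝ^d` and
`r : T → (0,∞)`, the number of ordered pairs `(x,y)`, `x ≠ y ∈ T`, with
`dist x y = r x` is at most `2k - 2`. -/
theorem stmt_4 (d : ℕ) (T : Finset (EuclideanSpace ℝ (Fin d)))
    (hcol : Collinear ℝ (T : Set (EuclideanSpace ℝ (Fin d))))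
    (r : EuclideanSpace ℝ (Fin d) → ℝ) (hr : ∀ x ∈ T, 0 < r x)
    (hk : 1 ≤ T.card) :
    (T.offDiag.filter fun q => dist q.1 q.2 = r q.1).card ≤ 2 * T.card - 2 := by
  classical
  set A := T.offDiag.filter fun q => dist q.1 q.2 = r q.1 with hA
  rcases lt_or_ge T.card 2 with h2 | h2
  · have hc : T.card = 1 := by omega
    have hle : A.card ≤ T.offDiag.card := Finset.card_filter_le _ _
    rw [Finset.offDiag_card, hc] at hle
    omega
  · obtain ⟨x0, hx0, y0, hy0, hxy0⟩ := Finset.one_lt_card.mp h2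
    obtain ⟨p, v, hpv⟩ := (collinear_iff_exists_forall_eq_smul_vadd (T : Set (EuclideanSpace ℝ (Fin d)))).mp hcol
    have hv : v ≠ 0 := by
      rintro rfl
      obtain ⟨t, ht⟩ := hpv x0 hx0
      obtain ⟨s, hs⟩ := hpv y0 hy0
      simp at ht hs
      exact hxy0 (ht.trans hs.symm)
    have hvn : (0:ℝ) < ‖v‖ := norm_pos_iff.mpr hv
    set f : EuclideanSpace ℝ (Fin d) → ℝ := fun x => (inner ℝ v x : ℝ) / ‖v‖ with hf
    have hdist : ∀ x ∈ T, ∀ y ∈ T, dist x y = |f x - f y| := by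
      intro x hx y hy
      obtain ⟨t, ht⟩ := hpv x hx
      obtain ⟨s, hs⟩ := hpv y hy
      simp only [vadd_eq_add] at ht hs
      have hxy : x - y = (t - s) • v := by rw [ht, hs]; module
      have h1 : f x - f y = (t - s) * ‖v‖ := by
        rw [hf]
        rw [div_sub_div_same, ← inner_sub_right, hxy, real_inner_smul_right,
          real_inner_self_eq_norm_sq]
        field_simp
      rw [dist_eq_norm, hxy, norm_smul, h1, abs_mul, abs_norm, Real.norm_eq_abs]
    have hinj : ∀ x ∈ T, ∀ y ∈ T, f x = f y → x = y := by
      intro x hx y hy h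
      have := hdist x hx y hy
      rw [h, sub_self, abs_zero] at this
      exact dist_eq_zero.mp this
    -- fiber counting
    have hmemA : ∀ q ∈ A, (q : _ × _).1 ∈ T ∧ q.2 ∈ T ∧ q.1 ≠ q.2 ∧ dist q.1 q.2 = r q.1 := by
      intro q hq
      rw [hA, Finset.mem_filter, Finset.mem_offDiag] at hq
      exact ⟨hq.1.1, hq.1.2.1, hq.1.2.2, hq.2⟩
    have hcardA : A.card = ∑ x ∈ T, (A.filter fun q => q.1 = x).card := by
      apply Finset.card_eq_sum_card_fiberwise
      intro q hq
      exact (hmemA q hq).1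
    set g : EuclideanSpace ℝ (Fin d) → ℕ := fun x => (A.filter fun q => q.1 = x).card with hg
    have hfiber : ∀ x, ∀ (S : Finset ℝ),
        (∀ q ∈ A, q.1 = x → f q.2 ∈ S) → g x ≤ S.card := by
      intro x S hS
      apply Finset.card_le_card_of_injOn (fun q => f q.2)
      · intro q hq
        rw [Finset.mem_coe, Finset.mem_filter] at hq
        exact hS q hq.1 hq.2
      · intro q hq q' hq' hqq
        rw [Finset.mem_coe, Finset.mem_filter] at hq hq'
        have h2 := hinj q.2 (hmemA q hq.1).2.1 q'.2 (hmemA q' hq'.1).2.1 hqq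
        exact Prod.ext (hq.2.trans hq'.2.symm) h2
    have hyval : ∀ x ∈ T, ∀ q ∈ A, q.1 = x → f q.2 = f x - r x ∨ f q.2 = f x + r x := by
      intro x hx q hq hq1
      obtain ⟨h1, h2, h3, h4⟩ := hmemA q hq
      subst hq1
      have := hdist q.1 h1 q.2 h2
      rw [h4] at this
      rcases abs_eq (le_of_lt (hr q.1 hx)) |>.mp this.symm with h | h
      · left; linarith
      · right; linarith
    have hg2 : ∀ x ∈ T, g x ≤ 2 := by
      intro x hx
      have := hfiber x {f x - r x, f x + r x} (fun q hq hq1 => by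
        rcases hyval x hx q hq hq1 with h | h
        · simp [h]
        · simp [h])
      calc g x ≤ _ := this
        _ ≤ 2 := Finset.card_le_two
    obtain ⟨m, hm, hmmin⟩ := T.exists_min_image f ⟨x0, hx0⟩
    obtain ⟨M, hM, hMmax⟩ := T.exists_max_image f ⟨x0, hx0⟩
    have hgm : g m ≤ 1 := by
      have := hfiber m {f m + r m} (fun q hq hq1 => by
        rcases hyval m hm q hq hq1 with h | h
        · exfalso
          have h5 := hmmin q.2 (hmemA q hq).2.1
          have := hr m hm
          rw [h] at h5
          linarith
        · simp [h])
      simpa using this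
    have hgM : g M ≤ 1 := by
      have := hfiber M {f M - r M} (fun q hq hq1 => by
        rcases hyval M hM q hq hq1 with h | h
        · simp [h]
        · exfalso
          have h5 := hMmax q.2 (hmemA q hq).2.1
          have := hr M hM
          rw [h] at h5
          linarith)
      simpa using this
    have hmM : m ≠ M := by
      intro h
      have h1 : f x0 = f m := le_antisymm (h ▸ hMmax x0 hx0) (hmmin x0 hx0)
      have h2 : f y0 = f m := le_antisymm (h ▸ hMmax y0 hy0) (hmmin y0 hy0)
      exact hxy0 (hinj x0 hx0 y0 hy0 (h1.trans h2.symm))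
    have hMem : M ∈ T.erase m := Finset.mem_erase.mpr ⟨Ne.symm hmM, hM⟩
    rw [hcardA, ← Finset.add_sum_erase T g hm, ← Finset.add_sum_erase _ g hMem]
    have hrest : ∑ x ∈ (T.erase m).erase M, g x ≤ 2 * ((T.erase m).erase M).card := by
      calc ∑ x ∈ (T.erase m).erase M, g x ≤ ∑ _x ∈ (T.erase m).erase M, 2 := by
            apply Finset.sum_le_sum
            intro x hx
            exact hg2 x (Finset.mem_of_mem_erase (Finset.mem_of_mem_erase hx))
        _ = 2 * ((T.erase m).erase M).card := by rw [Finset.sum_const]; ring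
    have hc1 : ((T.erase m).erase M).card = T.card - 2 := by
      rw [Finset.card_erase_of_mem hMem, Finset.card_erase_of_mem hm]
      omega
    omega
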